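/- The group PSL(3, 𝔽_3) contains a metacyclic subgroup isomorphic to a semidirect product ℤ/13 ⋊ ℤ/3 with faithful action: there exist an injective group homomorphism φ from ℤ/3 into the automorphism group of ℤ/13, and an injective group homomorphism from the semidirect product (ℤ/13) ⋊_φ (ℤ/3) into PSL(3, 𝔽_3). -/
import Mathlib


/-- The projective special linear group `PSL(n, F)`: the quotient of `SL(n, F)` by its center. -/
abbrev PSL (n : ℕ) (F : Type) [Field F] :=
  Matrix.SpecialLinearGroup (Fin n) F ⧸ Subgroup.center (Matrix.SpecialLinearGroup (Fin n) F)

open Matrix Matrix.SpecialLinearGroup Multiplicative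


namespace PSLMeta

instance : DecidableEq (SpecialLinearGroup (Fin 3) (ZMod 3)) :=
  fun _ _ => decidable_of_iff _ Subtype.ext_iff.symm

def A : SpecialLinearGroup (Fin 3) (ZMod 3) := ⟨!![0,0,1;1,0,1;0,1,0], by decide⟩
def B : SpecialLinearGroup (Fin 3) (ZMod 3) := ⟨!![1,1,1;0,1,2;0,0,1], by decide⟩

lemma hA13 : A ^ 13 = 1 := by decide
lemma hB3 : B ^ 3 = 1 := by decide
lemma hBA : B * A = A ^ 3 * B := by decide

lemma key : ∀ (x : ZMod 13) (y : ZMod 3), A ^ x.val * B ^ y.val = 1 → x = 0 ∧ y = 0 := by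
  decide

section homOfPow

variable {G : Type*} [Group G]

lemma pow_mod {a : G} {k : ℕ} (ha : a ^ k = 1) (m : ℕ) : a ^ (m % k) = a ^ m := by
  conv_rhs => rw [← Nat.mod_add_div m k]
  rw [pow_add, pow_mul, ha, one_pow, mul_one]

/-- Hom from `Multiplicative (ZMod n)` given an element whose `n`-th power is `1`. -/
def homOfPow (n : ℕ) [NeZero n] (a : G) (ha : a ^ n = 1) : Multiplicative (ZMod n) →* G where
  toFun x := a ^ (Multiplicative.toAdd x).val
  map_one' := by simp
  map_mul' x y := by
    show a ^ (toAdd x + toAdd y).val = a ^ (toAdd x).val * a ^ (toAdd y).val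
    rw [ZMod.val_add, pow_mod ha, pow_add]

@[simp] lemma homOfPow_apply (n : ℕ) [NeZero n] (a : G) (ha : a ^ n = 1)
    (x : Multiplicative (ZMod n)) : homOfPow n a ha x = a ^ (toAdd x).val := rfl

end homOfPow

/-- Multiplication by 3 as an automorphism of `Multiplicative (ZMod 13)`. -/
def σ : MulAut (Multiplicative (ZMod 13)) where
  toFun x := ofAdd (3 * toAdd x)
  invFun x := ofAdd (9 * toAdd x)
  left_inv x := by
    show ofAdd (9 * (3 * toAdd x)) = x
    rw [← mul_assoc, show ((9 : ZMod 13) * 3) = 1 by decide, one_mul, ofAdd_toAdd]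
  right_inv x := by
    show ofAdd (3 * (9 * toAdd x)) = x
    rw [← mul_assoc, show ((3 : ZMod 13) * 9) = 1 by decide, one_mul, ofAdd_toAdd]
  map_mul' x y := by
    show ofAdd (3 * (toAdd x + toAdd y)) = ofAdd (3 * toAdd x) * ofAdd (3 * toAdd y)
    rw [mul_add, ofAdd_add]

lemma sigma_pow (k : ℕ) (x : Multiplicative (ZMod 13)) :
    (σ ^ k) x = ofAdd (3 ^ k * toAdd x) := by
  induction k generalizing x with
  | zero => simp
  | succ k ih =>
    rw [pow_succ, MulAut.mul_apply]
    show (σ ^ k) (ofAdd (3 * toAdd x)) = _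
    rw [ih, toAdd_ofAdd, ← mul_assoc, ← pow_succ]

lemma sigma_cube : σ ^ 3 = 1 := by
  ext x
  rw [sigma_pow]
  show ofAdd ((3 : ZMod 13) ^ 3 * toAdd x) = ofAdd (toAdd x)
  rw [show ((3 : ZMod 13) ^ 3) = 1 by decide, one_mul]

def φ₀ : Multiplicative (ZMod 3) →* MulAut (Multiplicative (ZMod 13)) :=
  homOfPow 3 σ sigma_cube

lemma φ₀_injective : Function.Injective φ₀ := by
  rw [injective_iff_map_eq_one]
  intro y hy
  have h1 : (σ ^ (toAdd y).val) (ofAdd 1) = ofAdd 1 := by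
    rw [show σ ^ (toAdd y).val = φ₀ y from rfl, hy]; rfl
  rw [sigma_pow, toAdd_ofAdd, mul_one] at h1
  have h2 : (3 : ZMod 13) ^ (toAdd y).val = 1 := ofAdd.injective h1 ▸ rfl
  have h3 : ∀ z : ZMod 3, (3 : ZMod 13) ^ z.val = 1 → z = 0 := by decide
  have := h3 (toAdd y) h2
  simpa using this

def f₁ : Multiplicative (ZMod 13) →* SpecialLinearGroup (Fin 3) (ZMod 3) := homOfPow 13 A hA13
def f₂ : Multiplicative (ZMod 3) →* SpecialLinearGroup (Fin 3) (ZMod 3) := homOfPow 3 B hB3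

lemma conj_rel : ∀ (j m : ℕ), B ^ j * A ^ m * (B ^ j)⁻¹ = A ^ (3 ^ j * m) := by
  intro j
  induction j with
  | zero => intro m; simp
  | succ j ih =>
    intro m
    have h1 : B ^ (j+1) * A ^ m * (B ^ (j+1))⁻¹ = B ^ j * (B * A ^ m * B⁻¹) * (B ^ j)⁻¹ := by
      group
    have h2 : B * A ^ m * B⁻¹ = A ^ (3 * m) := by
      have : B * A * B⁻¹ = A ^ 3 := by rw [hBA]; group
      calc B * A ^ m * B⁻¹ = (B * A * B⁻¹) ^ m := by rw [conj_pow]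
        _ = (A ^ 3) ^ m := by rw [this]
        _ = A ^ (3 * m) := by rw [← pow_mul]
    rw [h1, h2, ih]
    congr 1
    ring

lemma pow_val_natCast {G : Type*} [Group G] {a : G} {n : ℕ} [NeZero n] (ha : a ^ n = 1)
    (t : ℕ) : a ^ ((t : ZMod n)).val = a ^ t := by
  rw [ZMod.val_natCast, pow_mod ha]

lemma compat : ∀ g, f₁.comp ((φ₀ g).toMonoidHom) =
    (MulAut.conj (f₂ g)).toMonoidHom.comp f₁ := by
  intro g
  refine MonoidHom.ext fun n => ?_
  show f₁ ((φ₀ g) n) = f₂ g * f₁ n * (f₂ g)⁻¹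
  have hφ : (φ₀ g) n = ofAdd ((3 : ZMod 13) ^ (toAdd g).val * toAdd n) := sigma_pow _ n
  set j := (toAdd g).val
  set x := toAdd n
  have hx : (3 : ZMod 13) ^ j * x = ((3 ^ j * x.val : ℕ) : ZMod 13) := by
    push_cast
    rw [ZMod.natCast_val, ZMod.cast_id]
  rw [hφ, hx]
  show A ^ (((3 ^ j * x.val : ℕ) : ZMod 13)).val = B ^ j * A ^ x.val * (B ^ j)⁻¹
  rw [pow_val_natCast hA13, conj_rel]

def lifted : (Multiplicative (ZMod 13)) ⋊[φ₀] (Multiplicative (ZMod 3)) →*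
    SpecialLinearGroup (Fin 3) (ZMod 3) :=
  SemidirectProduct.lift f₁ f₂ compat

lemma lifted_injective : Function.Injective lifted := by
  rw [injective_iff_map_eq_one]
  rintro ⟨n, h⟩ hone
  have : A ^ (toAdd n).val * B ^ (toAdd h).val = 1 := hone
  obtain ⟨h1, h2⟩ := key _ _ this
  ext
  · simpa using h1
  · simpa using h2

lemma center_eq_bot :
    Subgroup.center (SpecialLinearGroup (Fin 3) (ZMod 3)) = ⊥ := by
  ext M
  simp only [Subgroup.mem_bot]
  rw [mem_center_iff]
  constructor
  · rintro ⟨r, hr, hM⟩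
    have h3 : ∀ s : ZMod 3, s ^ 3 = 1 → s = 1 := by decide
    have hcard : (Fintype.card (Fin 3)) = 3 := by simp
    rw [hcard] at hr
    have : r = 1 := h3 r hr
    subst this
    ext i k
    rw [← hM]
    simp
  · rintro rfl
    exact ⟨1, by simp, by simp⟩

end PSLMeta


/-- The group `PSL(3, 𝔽_3)` contains a metacyclic subgroup isomorphic to a semidirect product
`ℤ/13 ⋊ ℤ/3` with faithful action. -/
theorem psl_three_three_contains_metacyclic :
    ∃ (φ : Multiplicative (ZMod 3) →* MulAut (Multiplicative (ZMod 13)))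
      (ψ : (Multiplicative (ZMod 13)) ⋊[φ] (Multiplicative (ZMod 3)) →* PSL 3 (ZMod 3)),
      Function.Injective φ ∧ Function.Injective ψ := by
  refine ⟨PSLMeta.φ₀,
    (QuotientGroup.mk' (Subgroup.center _)).comp PSLMeta.lifted,
    PSLMeta.φ₀_injective, ?_⟩
  have hmk : Function.Injective (QuotientGroup.mk' (Subgroup.center
      (Matrix.SpecialLinearGroup (Fin 3) (ZMod 3)))) := by
    rw [← MonoidHom.ker_eq_bot_iff, QuotientGroup.ker_mk']
    exact PSLMeta.center_eq_bot
  exact hmk.comp PSLMeta.lifted_injective
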